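/- arXiv:2407.05309 — 5 statements merged into one kernel-verified Lean document; each statement's English description precedes it below -/
import Mathlib

section
/- Let μ > 0, D > 0 with D ≠ 1, and α, β, b, G11, G15, G21 be real numbers with α·G15·b ≠ 0. Consider the system of equations in real unknowns (C1, C2): (i) 2·sqrt(μ)·C1 = α·(G11 + G15·(C2 + b·C1/((D-1)·μ))^2) and (ii) β·G21/D = 2·(sqrt(μ/D)·C2 + b·C1/((D-1)·sqrt(μ))). Then this system has two distinct real solution pairs (C1, C2) if and only if Δ > 0, where Δ = 4μ + (4α·G15·b/((1+sqrt(D))·μ))·(β·G21/sqrt(D) - α·b·G11/(μ·(1+sqrt(D)))). -/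
theorem pinned_pulse_existence_iff_discriminant_pos
    (μ D α β b G11 G15 G21 : ℝ)
    (hμ : 0 < μ) (hD : 0 < D) (hD1 : D ≠ 1)
    (hne : α * G15 * b ≠ 0) :
    (∃ p q : ℝ × ℝ, p ≠ q ∧
      (2 * Real.sqrt μ * p.1 =
          α * (G11 + G15 * (p.2 + b * p.1 / ((D - 1) * μ)) ^ 2) ∧
        β * G21 / D =
          2 * (Real.sqrt (μ / D) * p.2 + b * p.1 / ((D - 1) * Real.sqrt μ))) ∧
      (2 * Real.sqrt μ * q.1 =
          α * (G11 + G15 * (q.2 + b * q.1 / ((D - 1) * μ)) ^ 2) ∧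
        β * G21 / D =
          2 * (Real.sqrt (μ / D) * q.2 + b * q.1 / ((D - 1) * Real.sqrt μ))) ∧
      ∀ r : ℝ × ℝ,
        (2 * Real.sqrt μ * r.1 =
            α * (G11 + G15 * (r.2 + b * r.1 / ((D - 1) * μ)) ^ 2) ∧
          β * G21 / D =
            2 * (Real.sqrt (μ / D) * r.2 + b * r.1 / ((D - 1) * Real.sqrt μ))) →
        r = p ∨ r = q) ↔
    0 < 4 * μ + 4 * α * G15 * b / ((1 + Real.sqrt D) * μ) *
        (β * G21 / Real.sqrt D - α * b * G11 / (μ * (1 + Real.sqrt D))) := by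
  obtain ⟨s, hs, rfl⟩ : ∃ s : ℝ, 0 < s ∧ μ = s ^ 2 :=
    ⟨Real.sqrt μ, Real.sqrt_pos.2 hμ, (Real.sq_sqrt hμ.le).symm⟩
  obtain ⟨d, hd, rfl⟩ : ∃ d : ℝ, 0 < d ∧ D = d ^ 2 :=
    ⟨Real.sqrt D, Real.sqrt_pos.2 hD, (Real.sq_sqrt hD.le).symm⟩
  have h1 : Real.sqrt (s ^ 2) = s := Real.sqrt_sq hs.le
  have h2 : Real.sqrt (d ^ 2) = d := Real.sqrt_sq hd.le
  have h3 : Real.sqrt (s ^ 2 / d ^ 2) = s / d := by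
    rw [Real.sqrt_div (sq_nonneg s), h1, h2]
  rw [h1, h2, h3]
  have hs0 : s ≠ 0 := hs.ne'
  have hd0 : d ≠ 0 := hd.ne'
  have hD10 : d ^ 2 - 1 ≠ 0 := sub_ne_zero.2 hD1
  have h1d : (1 : ℝ) + d ≠ 0 := by positivity
  have hα : α ≠ 0 := fun h => hne (by rw [h]; ring)
  have hG15 : G15 ≠ 0 := fun h => hne (by rw [h]; ring)
  have hb : b ≠ 0 := fun h => hne (by rw [h]; ring)
  have hd1' : d - 1 ≠ 0 := by
    intro h
    apply hD1
    have : d = 1 := by linarith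
    rw [this]; ring
  -- quadratic coefficients
  set AA : ℝ := α * G15 * (b * (d - 1) / ((d ^ 2 - 1) * s ^ 2)) ^ 2 with hAAdef
  set BB : ℝ := -(2 * α * G15 * (β * G21 / (2 * s * d)) *
      (b * (d - 1) / ((d ^ 2 - 1) * s ^ 2))) - 2 * s with hBBdef
  set CC : ℝ := α * G11 + α * G15 * (β * G21 / (2 * s * d)) ^ 2 with hCCdef
  have hAA : AA ≠ 0 := by
    rw [hAAdef]
    exact mul_ne_zero (mul_ne_zero hα hG15)
      (pow_ne_zero 2 (div_ne_zero (mul_ne_zero hb hd1')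
        (mul_ne_zero hD10 (pow_ne_zero 2 hs0))))
  have hsys : ∀ x y : ℝ,
      ((2 * s * x = α * (G11 + G15 * (y + b * x / ((d ^ 2 - 1) * s ^ 2)) ^ 2)) ∧
        β * G21 / d ^ 2 = 2 * (s / d * y + b * x / ((d ^ 2 - 1) * s))) ↔
      (AA * x ^ 2 + BB * x + CC = 0 ∧
        y = β * G21 / (2 * s * d) - d * b / ((d ^ 2 - 1) * s ^ 2) * x) := by
    intro x y
    rw [hAAdef, hBBdef, hCCdef]
    constructor
    · rintro ⟨hA, hB⟩
      have hy : y = β * G21 / (2 * s * d) - d * b / ((d ^ 2 - 1) * s ^ 2) * x := by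
        field_simp at hB ⊢
        apply mul_right_cancel₀ hd0
        linear_combination (-d) * hB
      subst hy
      exact ⟨by linear_combination -hA, rfl⟩
    · rintro ⟨hQ, hy⟩
      subst hy
      constructor
      · linear_combination -hQ
      · field_simp
        ring
  have hΔ : BB ^ 2 - 4 * AA * CC =
      4 * s ^ 2 + 4 * α * G15 * b / ((1 + d) * s ^ 2) *
        (β * G21 / d - α * b * G11 / (s ^ 2 * (1 + d))) := by
    rw [hAAdef, hBBdef, hCCdef]
    field_simp
    ring
  clear_value AA BB CC
  constructor
  · rintro ⟨p, q, hpq, hp, hq, -⟩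
    obtain ⟨hQp, hyp⟩ := (hsys p.1 p.2).1 hp
    obtain ⟨hQq, hyq⟩ := (hsys q.1 q.2).1 hq
    have hx : p.1 ≠ q.1 := by
      intro h
      exact hpq (Prod.ext h (by rw [hyp, hyq, h]))
    have h5 : AA * (p.1 + q.1) + BB = 0 := by
      apply mul_left_cancel₀ (sub_ne_zero.2 hx)
      linear_combination hQp - hQq
    have hbb' : BB = -(AA * (p.1 + q.1)) := by linarith
    have hcc' : CC = AA * p.1 * q.1 := by linear_combination hQp - p.1 * h5
    have h6 : BB ^ 2 - 4 * AA * CC = (AA * (p.1 - q.1)) ^ 2 := by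
      rw [hbb', hcc']; ring
    have h7 : AA * (p.1 - q.1) ≠ 0 := mul_ne_zero hAA (sub_ne_zero.2 hx)
    have h8 : 0 < BB ^ 2 - 4 * AA * CC := by
      rw [h6]
      exact lt_of_le_of_ne (sq_nonneg _) (Ne.symm (pow_ne_zero 2 h7))
    linarith
  · intro hpos
    have hdisc : 0 < BB ^ 2 - 4 * AA * CC := by linarith
    set δ : ℝ := Real.sqrt (BB ^ 2 - 4 * AA * CC) with hδdef
    have hδ0 : 0 < δ := Real.sqrt_pos.2 hdisc
    have hds : discrim AA BB CC = δ * δ := by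
      rw [discrim]
      exact (Real.mul_self_sqrt hdisc.le).symm
    have h2AA : (2 : ℝ) * AA ≠ 0 := mul_ne_zero two_ne_zero hAA
    set x₁ : ℝ := (-BB + δ) / (2 * AA) with hx1
    set x₂ : ℝ := (-BB - δ) / (2 * AA) with hx2
    have hroot : ∀ x : ℝ, AA * x ^ 2 + BB * x + CC = 0 ↔ x = x₁ ∨ x = x₂ := by
      intro x
      have h := quadratic_eq_zero_iff hAA hds x
      rwa [show AA * (x * x) = AA * x ^ 2 by ring] at h
    have hx12 : x₁ ≠ x₂ := by
      intro h
      rw [hx1, hx2, div_eq_div_iff h2AA h2AA] at h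
      have h' := mul_right_cancel₀ h2AA h
      linarith
    refine ⟨(x₁, β * G21 / (2 * s * d) - d * b / ((d ^ 2 - 1) * s ^ 2) * x₁),
      (x₂, β * G21 / (2 * s * d) - d * b / ((d ^ 2 - 1) * s ^ 2) * x₂), ?_, ?_, ?_, ?_⟩
    · intro h
      exact hx12 (congrArg Prod.fst h)
    · exact (hsys x₁ _).2 ⟨(hroot x₁).2 (Or.inl rfl), rfl⟩
    · exact (hsys x₂ _).2 ⟨(hroot x₂).2 (Or.inr rfl), rfl⟩
    · intro r hr
      obtain ⟨hQr, hyr⟩ := (hsys r.1 r.2).1 hr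
      rcases (hroot r.1).1 hQr with h | h
      · left; exact Prod.ext h (by rw [hyr, h])
      · right; exact Prod.ext h (by rw [hyr, h])
end

section
/- Let D > 0 with D ≠ 1, let α, b, G15, S be real numbers with α·G15·S ≠ 0, and let t be a nonzero complex number. Then the linear system in complex unknowns (C3, C4): 2t·C3 = 2α·G15·S·(C4 + b·C3/((D-1)·t^2)) and 0 = 2·(t·C4/sqrt(D) + b·C3/((D-1)·t)) has a solution (C3, C4) ≠ (0, 0) if and only if t^3 = -α·b·G15·S/(1 + sqrt(D)). -/
theorem eigenvalue_matching_iff_cubic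
    (D α b G15 S : ℝ) (hD : 0 < D) (hD1 : D ≠ 1)
    (hne : α * G15 * S ≠ 0) (t : ℂ) (ht : t ≠ 0) :
    (∃ C3 C4 : ℂ, (C3, C4) ≠ (0, 0) ∧
      2 * t * C3 =
        2 * (α : ℂ) * (G15 : ℂ) * (S : ℂ) *
          (C4 + (b : ℂ) * C3 / (((D : ℂ) - 1) * t ^ 2)) ∧
      0 = 2 * (t * C4 / (Real.sqrt D : ℂ) + (b : ℂ) * C3 / (((D : ℂ) - 1) * t))) ↔
    t ^ 3 = -((α : ℂ) * (b : ℂ) * (G15 : ℂ) * (S : ℂ)) / (1 + (Real.sqrt D : ℂ)) := by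
  set s : ℂ := (Real.sqrt D : ℂ) with hs_def
  have hsr : (0:ℝ) < Real.sqrt D := Real.sqrt_pos.mpr hD
  have hs0 : s ≠ 0 := by
    simp [hs_def, Complex.ofReal_ne_zero, ne_of_gt hsr]
  have hs2 : s ^ 2 = (D : ℂ) := by
    rw [hs_def, ← Complex.ofReal_pow, Real.sq_sqrt hD.le]
  clear_value s
  have hd : ((D : ℂ) - 1) ≠ 0 := by
    intro h
    apply hD1
    have : (D : ℂ) = 1 := by linear_combination h
    exact_mod_cast this
  have h1s : (1 : ℂ) + s ≠ 0 := by
    intro h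
    have hs1 : Real.sqrt D = -1 := by
      rw [hs_def] at h
      have h2 : (1 + Real.sqrt D : ℝ) = 0 := by
        exact_mod_cast show ((1 + Real.sqrt D : ℝ) : ℂ) = 0 by push_cast; linear_combination h
      linarith
    linarith [Real.sqrt_nonneg D]
  have hfac : (D : ℂ) - 1 = (s - 1) * (s + 1) := by linear_combination -hs2
  have hsm1 : s - 1 ≠ 0 := by
    intro h
    exact hd (by rw [hfac, h]; ring)
  have hne' : (α : ℂ) * (G15 : ℂ) * (S : ℂ) ≠ 0 := by
    exact_mod_cast Complex.ofReal_ne_zero.mpr hne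
  have hdt : ((D : ℂ) - 1) * t ^ 2 ≠ 0 := mul_ne_zero hd (pow_ne_zero 2 ht)
  constructor
  · rintro ⟨C3, C4, hnz, h1, h2⟩
    have h2' : t * C4 * ((D:ℂ) - 1) * t + s * ((b:ℂ) * C3) = 0 := by
      field_simp at h2
      linear_combination (-1/2 : ℂ) * h2
    have hC4 : C4 = -(s * (b:ℂ) * C3) / (((D:ℂ) - 1) * t^2) := by
      field_simp
      linear_combination h2'
    have hC3 : C3 ≠ 0 := by
      intro h
      apply hnz
      have : C4 = 0 := by rw [hC4, h]; simp
      simp [h, this]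
    have h1' : 2 * t * C3 * (((D:ℂ) - 1) * t^2)
        = 2 * (α:ℂ) * (G15:ℂ) * (S:ℂ) * ((C4 * (((D:ℂ)-1) * t^2)) + (b:ℂ) * C3) := by
      field_simp at h1
      linear_combination 2 * h1
    rw [hC4] at h1'
    rw [div_mul_cancel₀ _ hdt] at h1'
    rw [eq_div_iff h1s]
    have key : (t^3 * (((D:ℂ)) - 1) - (α:ℂ) * (G15:ℂ) * (S:ℂ) * (b:ℂ) * (1 - s)) * C3 = 0 := by
      linear_combination (1/2 : ℂ) * h1'
    have key2 : t^3 * (((D:ℂ)) - 1) = (α:ℂ) * (G15:ℂ) * (S:ℂ) * (b:ℂ) * (1 - s) := by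
      rcases mul_eq_zero.mp key with h | h
      · linear_combination h
      · exact absurd h hC3
    rw [hfac] at key2
    exact mul_right_cancel₀ hsm1 (by linear_combination key2)
  · intro hcube
    rw [eq_div_iff h1s] at hcube
    refine ⟨1, -(s * (b:ℂ)) / (((D:ℂ) - 1) * t^2), ?_, ?_, ?_⟩
    · simp
    · rw [hfac]
      have hdt' : (s - 1) * (s + 1) * t ^ 2 ≠ 0 :=
        mul_ne_zero (mul_ne_zero hsm1 (by simpa [add_comm] using h1s)) (pow_ne_zero 2 ht)
      field_simp
      rw [eq_div_iff (by simpa [add_comm] using h1s)]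
      linear_combination (s-1) * hcube
    · field_simp
      ring
end

section
/- Let μ > 0, D > 0 with D ≠ 1, and α, β, b, G11, G15, G22 be real numbers such that α·G15 ≠ 0 and k := β·G22/(2·sqrt(μ·D)) - b/(μ·(1+sqrt(D))) ≠ 0. Consider the system of equations in real unknowns (C1, C2): (i) 2·sqrt(μ)·C1 = α·(G11 + G15·(C2 + b·C1/((D-1)·μ))^2) and (ii) β·G22·C1/D = 2·(sqrt(μ/D)·C2 + b·C1/((D-1)·sqrt(μ))). Then this system has two distinct real solution pairs (C1, C2) if and only if Δ > 0, where Δ = 4μ - 4α²·G15·G11·(β·G22/(2·sqrt(μ·D)) - b/(μ·(1+sqrt(D))))². -/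
lemma quad_two_roots_iff (A B C : ℝ) (hA : A ≠ 0) :
    (∃ x y : ℝ, x ≠ y ∧ (A*x^2 + B*x + C = 0) ∧ (A*y^2 + B*y + C = 0) ∧
      ∀ z, A*z^2 + B*z + C = 0 → z = x ∨ z = y) ↔ 0 < B^2 - 4*A*C := by
  constructor
  · rintro ⟨x, y, hxy, hx, hy, -⟩
    have h0 : (x - y) * (A*(x+y) + B) = 0 := by linear_combination hx - hy
    have hB : A*(x+y) + B = 0 := by
      rcases mul_eq_zero.mp h0 with h | h
      · exact absurd (sub_eq_zero.mp h) hxy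
      · exact h
    have hC : C = A*x*y := by linear_combination hx - x*hB
    have hBe : B = -A*(x+y) := by linarith
    have hxy0 : x - y ≠ 0 := sub_ne_zero.mpr hxy
    have : B^2 - 4*A*C = (A*(x-y))^2 := by rw [hBe, hC]; ring
    rw [this]
    positivity
  · intro h
    set d := Real.sqrt (B^2 - 4*A*C) with hd
    have hd2 : d * d = B^2 - 4*A*C := Real.mul_self_sqrt h.le
    have hd0 : 0 < d := Real.sqrt_pos.mpr h
    have hdisc : discrim A B C = d * d := by rw [hd2, discrim]
    refine ⟨(-B+d)/(2*A), (-B-d)/(2*A), ?_, ?_, ?_, ?_⟩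
    · intro he
      have h2A : (2*A) ≠ 0 := by simpa using hA
      field_simp at he
      exact hd0.ne' (by linarith)
    · have h := (quadratic_eq_zero_iff hA hdisc ((-B+d)/(2*A))).mpr (Or.inl rfl)
      linear_combination h
    · have h := (quadratic_eq_zero_iff hA hdisc ((-B-d)/(2*A))).mpr (Or.inr rfl)
      linear_combination h
    · intro z hz
      exact (quadratic_eq_zero_iff hA hdisc z).mp (by linear_combination hz)

theorem pinned_pulse_existence_iff_discriminant_pos_G22
    (μ D α β b G11 G15 G22 : ℝ)
    (hμ : 0 < μ) (hD : 0 < D) (hD1 : D ≠ 1)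
    (hne : α * G15 ≠ 0)
    (hk : β * G22 / (2 * Real.sqrt (μ * D)) - b / (μ * (1 + Real.sqrt D)) ≠ 0) :
    (∃ p q : ℝ × ℝ, p ≠ q ∧
      (2 * Real.sqrt μ * p.1 =
          α * (G11 + G15 * (p.2 + b * p.1 / ((D - 1) * μ)) ^ 2) ∧
        β * G22 * p.1 / D =
          2 * (Real.sqrt (μ / D) * p.2 + b * p.1 / ((D - 1) * Real.sqrt μ))) ∧
      (2 * Real.sqrt μ * q.1 =
          α * (G11 + G15 * (q.2 + b * q.1 / ((D - 1) * μ)) ^ 2) ∧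
        β * G22 * q.1 / D =
          2 * (Real.sqrt (μ / D) * q.2 + b * q.1 / ((D - 1) * Real.sqrt μ))) ∧
      ∀ r : ℝ × ℝ,
        (2 * Real.sqrt μ * r.1 =
            α * (G11 + G15 * (r.2 + b * r.1 / ((D - 1) * μ)) ^ 2) ∧
          β * G22 * r.1 / D =
            2 * (Real.sqrt (μ / D) * r.2 + b * r.1 / ((D - 1) * Real.sqrt μ))) →
        r = p ∨ r = q) ↔
    0 < 4 * μ - 4 * α ^ 2 * G15 * G11 *
        (β * G22 / (2 * Real.sqrt (μ * D)) - b / (μ * (1 + Real.sqrt D))) ^ 2 := by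
  have hs0 : 0 < Real.sqrt μ := Real.sqrt_pos.mpr hμ
  have ht0 : 0 < Real.sqrt D := Real.sqrt_pos.mpr hD
  have hμD : Real.sqrt (μ * D) = Real.sqrt μ * Real.sqrt D := Real.sqrt_mul hμ.le D
  have hμdivD : Real.sqrt (μ / D) = Real.sqrt μ / Real.sqrt D := Real.sqrt_div hμ.le D
  rw [hμD] at hk ⊢
  rw [hμdivD]
  set s := Real.sqrt μ with hsdef
  set t := Real.sqrt D with htdef
  have hs2 : s^2 = μ := Real.sq_sqrt hμ.le
  have ht2 : t^2 = D := Real.sq_sqrt hD.le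
  have ht1 : t ≠ 1 := fun h => hD1 (by rw [← ht2, h]; norm_num)
  have hD0 : D ≠ 0 := hD.ne'
  have hμ0 : μ ≠ 0 := hμ.ne'
  have hs : s ≠ 0 := hs0.ne'
  have ht : t ≠ 0 := ht0.ne'
  have hD1' : D - 1 ≠ 0 := sub_ne_zero.mpr hD1
  have h1t : 1 + t ≠ 0 := by positivity
  set k := β * G22 / (2 * (s * t)) - b / (μ * (1 + t)) with hkdef
  set c := t/(2*s) * (β*G22/D - 2*b/((D-1)*s)) with hcdef
  have hck : c + b/((D-1)*μ) = k := by
    rw [hcdef, hkdef, ← hs2, ← ht2]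
    have hD1'' : t^2 - 1 ≠ 0 := by rw [ht2]; exact hD1'
    field_simp
    ring
  -- equation (ii) equivalence
  have factor : ∀ x y : ℝ, 2*(s/t*y + b*x/((D-1)*s)) - β*G22*x/D = (2*s/t) * (y - c*x) := by
    intro x y
    rw [hcdef]
    field_simp
    ring
  have h2st : (2*s/t) ≠ 0 := by positivity
  have eq2_iff : ∀ x y : ℝ, (β*G22*x/D = 2*(s/t*y + b*x/((D-1)*s))) ↔ y = c*x := by
    intro x y
    constructor
    · intro h
      have h' : (2*s/t) * (y - c*x) = 0 := by rw [← factor x y]; linarith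
      rcases mul_eq_zero.mp h' with h'' | h''
      · exact absurd h'' h2st
      · linarith [sub_eq_zero.mp h'']
    · intro h
      have h' : 2*(s/t*y + b*x/((D-1)*s)) - β*G22*x/D = 0 := by
        rw [factor x y, h]; ring
      linarith
  -- system equivalence
  have Piff : ∀ r : ℝ × ℝ,
      ((2 * s * r.1 = α * (G11 + G15 * (r.2 + b * r.1 / ((D - 1) * μ)) ^ 2) ∧
        β * G22 * r.1 / D = 2 * (s / t * r.2 + b * r.1 / ((D - 1) * s)))) ↔
      ((α*G15*k^2) * r.1^2 + (-(2*s)) * r.1 + α*G11 = 0 ∧ r.2 = c * r.1) := by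
    intro r
    rw [eq2_iff r.1 r.2]
    constructor
    · rintro ⟨h1, h2⟩
      refine ⟨?_, h2⟩
      have hsub : r.2 + b * r.1 / ((D - 1) * μ) = k * r.1 := by
        rw [h2, ← hck]; ring
      rw [hsub] at h1
      linear_combination -h1
    · rintro ⟨h1, h2⟩
      refine ⟨?_, h2⟩
      have hsub : r.2 + b * r.1 / ((D - 1) * μ) = k * r.1 := by
        rw [h2, ← hck]; ring
      rw [hsub]
      linear_combination -h1
  have hA : α*G15*k^2 ≠ 0 := by
    apply mul_ne_zero hne
    positivity
  have hdisc_eq : (-(2*s))^2 - 4*(α*G15*k^2)*(α*G11) = 4*μ - 4*α^2*G15*G11*k^2 := by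
    rw [← hs2]; ring
  rw [← hdisc_eq, ← quad_two_roots_iff (α*G15*k^2) (-(2*s)) (α*G11) hA]
  constructor
  · rintro ⟨p, q, hpq, hp, hq, huniq⟩
    refine ⟨p.1, q.1, ?_, ((Piff p).mp hp).1, ((Piff q).mp hq).1, ?_⟩
    · intro h
      apply hpq
      have hp2 := ((Piff p).mp hp).2
      have hq2 := ((Piff q).mp hq).2
      exact Prod.ext h (by rw [hp2, hq2, h])
    · intro z hz
      have hr := huniq (z, c*z) ((Piff (z, c*z)).mpr ⟨hz, rfl⟩)
      rcases hr with h | h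
      · exact Or.inl (congrArg Prod.fst h)
      · exact Or.inr (congrArg Prod.fst h)
  · rintro ⟨x, y, hxy, hx, hy, huniq⟩
    refine ⟨(x, c*x), (y, c*y), ?_, (Piff (x, c*x)).mpr ⟨hx, rfl⟩,
      (Piff (y, c*y)).mpr ⟨hy, rfl⟩, ?_⟩
    · intro h
      exact hxy (congrArg Prod.fst h)
    · intro r hr
      obtain ⟨h1, h2⟩ := (Piff r).mp hr
      rcases huniq r.1 h1 with h | h
      · exact Or.inl (Prod.ext h (by rw [h2, h]))
      · exact Or.inr (Prod.ext h (by rw [h2, h]))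
end

section
/- Let D > 0 with D ≠ 1, let α, β, b, G15, G22, S be real numbers with α·G15·S ≠ 0, and let t be a nonzero complex number. Then the linear system in complex unknowns (C3, C4): 2t·C3 = 2α·G15·S·(C4 + b·C3/((D-1)·t^2)) and (β·G22/D)·C3 = 2·(t·C4/sqrt(D) + b·C3/((D-1)·t)) has a solution (C3, C4) ≠ (0, 0) if and only if t^3 + B1·t + E1 = 0, where B1 = -α·β·G15·G22·S/(2·sqrt(D)) and E1 = α·b·G15·S/(1+sqrt(D)). -/
theorem eigenvalue_matching_iff_depressed_cubic
    (D α β b G15 G22 S : ℝ) (hD : 0 < D) (hD1 : D ≠ 1)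
    (hne : α * G15 * S ≠ 0) (t : ℂ) (ht : t ≠ 0)
    (B1 E1 : ℝ)
    (hB1 : B1 = -(α * β * G15 * G22 * S) / (2 * Real.sqrt D))
    (hE1 : E1 = α * b * G15 * S / (1 + Real.sqrt D)) :
    (∃ C3 C4 : ℂ, (C3, C4) ≠ (0, 0) ∧
      2 * t * C3 =
        2 * (α : ℂ) * (G15 : ℂ) * (S : ℂ) *
          (C4 + (b : ℂ) * C3 / (((D : ℂ) - 1) * t ^ 2)) ∧
      ((β : ℂ) * (G22 : ℂ) / (D : ℂ)) * C3 =
        2 * (t * C4 / (Real.sqrt D : ℂ) + (b : ℂ) * C3 / (((D : ℂ) - 1) * t))) ↔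
    t ^ 3 + (B1 : ℂ) * t + (E1 : ℂ) = 0 := by
  have hs0 : Real.sqrt D ≠ 0 := (Real.sqrt_pos.2 hD).ne'
  have hsC : ((Real.sqrt D : ℝ) : ℂ) ≠ 0 := by exact_mod_cast hs0
  have hs1R : Real.sqrt D ≠ 1 := fun h => hD1 (by
    have := congrArg (· ^ 2) h
    simpa [Real.sq_sqrt hD.le] using this)
  have hs1 : ((Real.sqrt D : ℝ) : ℂ) - 1 ≠ 0 := by
    intro h
    exact hs1R (by exact_mod_cast sub_eq_zero.mp h)
  have hs2 : ((Real.sqrt D : ℝ) : ℂ) * ((Real.sqrt D : ℝ) : ℂ) = (D : ℂ) := by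
    rw [← Complex.ofReal_mul, Real.mul_self_sqrt hD.le]
  have hD0 : (D : ℂ) ≠ 0 := by exact_mod_cast hD.ne'
  have hDm1 : (D : ℂ) - 1 ≠ 0 := by
    intro h
    exact hD1 (by exact_mod_cast sub_eq_zero.mp h)
  have h1s : (1 : ℂ) + (Real.sqrt D : ℝ) ≠ 0 := by
    have : (0:ℝ) < 1 + Real.sqrt D := by positivity
    exact_mod_cast this.ne'
  have hA : (α : ℂ) * (G15 : ℂ) * (S : ℂ) ≠ 0 := by exact_mod_cast hne
  subst hB1 hE1
  push_cast
  constructor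
  · rintro ⟨C3, C4, hnz, h1, h2⟩
    have hC3 : C3 ≠ 0 := by
      intro h
      apply hnz
      have h1'' : (2:ℂ) * ((α:ℂ) * (G15:ℂ) * (S:ℂ)) * C4 = 0 := by
        rw [h] at h1
        linear_combination (-1 : ℂ) * h1
      have hC4 : C4 = 0 := by
        rcases mul_eq_zero.mp h1'' with h' | h'
        · rcases mul_eq_zero.mp h' with h'' | h''
          · exact absurd h'' two_ne_zero
          · exact absurd h'' hA
        · exact h'
      rw [h, hC4]
    have main : (t ^ 3 + (-(↑α * ↑β * ↑G15 * ↑G22 * ↑S) / (2 * (Real.sqrt D:ℂ))) * t +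
        (↑α * ↑b * ↑G15 * ↑S : ℂ) / (1 + (Real.sqrt D:ℂ))) * C3 = 0 := by
      field_simp at h1 h2 ⊢
      have key : ((Real.sqrt D:ℂ) * ((Real.sqrt D:ℂ) - 1)) *
          (((t ^ 3 * (2 * (Real.sqrt D:ℂ)) + -(↑α * ↑β * ↑G15 * ↑G22 * ↑S * t)) * (1 + (Real.sqrt D:ℂ)) +
            ↑α * ↑b * ↑G15 * ↑S * (2 * (Real.sqrt D:ℂ))) * C3) = 0 := by
        rw [← hs2] at h1 h2
        linear_combination (2*((Real.sqrt D:ℂ)*(Real.sqrt D:ℂ))) * h1 - ((α:ℂ)*(G15:ℂ)*(S:ℂ)) * h2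
      have := (mul_eq_zero.mp key).resolve_left (mul_ne_zero hsC hs1)
      linear_combination this
    have := (mul_eq_zero.mp main).resolve_right hC3
    linear_combination this
  · intro hcub
    have hcub' : (t ^ 3 * (2 * (Real.sqrt D:ℂ)) + -(↑α * ↑β * ↑G15 * ↑G22 * ↑S * t)) *
        (1 + (Real.sqrt D:ℂ)) + ↑α * ↑b * ↑G15 * ↑S * (2 * (Real.sqrt D:ℂ)) = 0 := by
      field_simp at hcub
      linear_combination hcub
    refine ⟨(α:ℂ)*(G15:ℂ)*(S:ℂ) * (((D:ℂ)-1)*t^2),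
        t*(((D:ℂ)-1)*t^2) - (α:ℂ)*(G15:ℂ)*(S:ℂ)*(b:ℂ), ?_, ?_, ?_⟩
    · intro h
      exact (mul_ne_zero hA (mul_ne_zero hDm1 (pow_ne_zero 2 ht))) (congrArg Prod.fst h)
    · field_simp; ring
    · field_simp
      rw [← hs2]
      linear_combination (-(Real.sqrt D:ℂ)*((Real.sqrt D:ℂ)-1)) * hcub'
end

section
/- Define the real numbers p = (3 + 2·sqrt(2))^(1/3), q = (3 - 2·sqrt(2))^(1/3), μ̂ = (1/12)·(4 - p - q), and ω_H = (sqrt(3)/12)·(p - q). Then μ̂ > 0 and ω_H > 0, and there exists a complex number t with Re t > 0, t² = μ̂ + i·ω_H, and t³ - t/2 + 1/(3·sqrt(3)) = 0. -/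
set_option maxHeartbeats 1000000


open Complex in
theorem concrete_example_hopf_point
    (p q μhat ωH : ℝ)
    (hp : p = (3 + 2 * Real.sqrt 2) ^ ((1 : ℝ) / 3))
    (hq : q = (3 - 2 * Real.sqrt 2) ^ ((1 : ℝ) / 3))
    (hμ : μhat = (1 / 12) * (4 - p - q))
    (hω : ωH = (Real.sqrt 3 / 12) * (p - q)) :
    0 < μhat ∧ 0 < ωH ∧
      ∃ t : ℂ, 0 < t.re ∧ t ^ 2 = (μhat : ℂ) + (ωH : ℂ) * I ∧
        t ^ 3 - t / 2 + 1 / (3 * (Real.sqrt 3 : ℂ)) = 0 := by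
  have h2nn : (0:ℝ) ≤ Real.sqrt 2 := Real.sqrt_nonneg 2
  have h2pos : (0:ℝ) < Real.sqrt 2 := Real.sqrt_pos.mpr (by norm_num)
  have h2sq : Real.sqrt 2 ^ 2 = 2 := Real.sq_sqrt (by norm_num)
  have h2lt : Real.sqrt 2 < 3/2 := by nlinarith [h2sq, h2nn]
  have h3pos : (0:ℝ) < Real.sqrt 3 := Real.sqrt_pos.mpr (by norm_num)
  have h3sq : Real.sqrt 3 ^ 2 = 3 := Real.sq_sqrt (by norm_num)
  set A : ℝ := ((2 + Real.sqrt 2)/4) ^ ((1:ℝ)/3) with hAdef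
  set B : ℝ := ((2 - Real.sqrt 2)/4) ^ ((1:ℝ)/3) with hBdef
  have hbA : (0:ℝ) < (2 + Real.sqrt 2)/4 := by nlinarith
  have hbB : (0:ℝ) < (2 - Real.sqrt 2)/4 := by nlinarith
  have hApos : 0 < A := Real.rpow_pos_of_pos hbA _
  have hBpos : 0 < B := Real.rpow_pos_of_pos hbB _
  have cube : ∀ x : ℝ, 0 ≤ x → (x ^ ((1:ℝ)/3)) ^ (3:ℕ) = x := by
    intro x hx
    rw [← Real.rpow_natCast (x ^ ((1:ℝ)/3)) 3, ← Real.rpow_mul hx]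
    norm_num
  have cubeq : ∀ x y : ℝ, 0 < x → 0 < y → x^3 = y^3 → x = y := by
    intro x y hx hy h
    nlinarith [sq_nonneg (x - y), sq_nonneg (x + y), mul_pos hx hy]
  have hA3 : A ^ 3 = (2 + Real.sqrt 2)/4 := cube _ hbA.le
  have hB3 : B ^ 3 = (2 - Real.sqrt 2)/4 := cube _ hbB.le
  have hAB : A * B = 1/2 := by
    apply cubeq _ _ (mul_pos hApos hBpos) (by norm_num)
    rw [mul_pow, hA3, hB3]
    linear_combination (-(1:ℝ)/16) * h2sq
  have h1R : A ^ 3 + B ^ 3 = 1 := by rw [hA3, hB3]; ring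
  have hppos : 0 < p := hp ▸ Real.rpow_pos_of_pos (by nlinarith) _
  have hqpos : 0 < q := hq ▸ Real.rpow_pos_of_pos (by nlinarith) _
  have hp3 : p ^ 3 = 3 + 2 * Real.sqrt 2 := by rw [hp]; exact cube _ (by nlinarith)
  have hq3 : q ^ 3 = 3 - 2 * Real.sqrt 2 := by rw [hq]; exact cube _ (by nlinarith)
  have hp2A : p = 2 * A ^ 2 := by
    apply cubeq _ _ hppos (by positivity)
    rw [hp3, show (2 * A ^ 2) ^ 3 = 8 * (A ^ 3) ^ 2 by ring, hA3]
    linear_combination (-(1:ℝ)/2) * h2sq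
  have hq2B : q = 2 * B ^ 2 := by
    apply cubeq _ _ hqpos (by positivity)
    rw [hq3, show (2 * B ^ 2) ^ 3 = 8 * (B ^ 3) ^ 2 by ring, hB3]
    linear_combination (-(1:ℝ)/2) * h2sq
  have hAlt : A < 1 := Real.rpow_lt_one hbA.le (by linarith) (by norm_num)
  have hBlt : B < 1 := Real.rpow_lt_one hbB.le (by linarith) (by norm_num)
  have hBA : B < A := Real.rpow_lt_rpow hbB.le (by linarith) (by norm_num)
  have hμ' : μhat = (4 - 2 * A ^ 2 - 2 * B ^ 2) / 12 := by
    rw [hμ, hp2A, hq2B]; ring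
  have hω' : ωH = Real.sqrt 3 * (2 * A ^ 2 - 2 * B ^ 2) / 12 := by
    rw [hω, hp2A, hq2B]; ring
  refine ⟨?_, ?_, ?_⟩
  · rw [hμ']
    nlinarith [hApos, hBpos, hAlt, hBlt]
  · rw [hω']
    have h : B ^ 2 < A ^ 2 := by nlinarith
    nlinarith [mul_pos h3pos (sub_pos.mpr h)]
  · -- the root
    refine ⟨((Real.sqrt 3 * (A + B) / 6 : ℝ) : ℂ) + (((A - B)/2 : ℝ) : ℂ) * I, ?_, ?_, ?_⟩
    · simp only [Complex.add_re, Complex.ofReal_re, Complex.mul_re, Complex.ofReal_im,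
        Complex.I_re, Complex.I_im]
      have : 0 < Real.sqrt 3 * (A + B) / 6 := by positivity
      nlinarith [this]
    · have habC : (A:ℂ) * (B:ℂ) = 1/2 := by rw [← Complex.ofReal_mul, hAB]; norm_num
      have hrC : ((Real.sqrt 3 : ℝ):ℂ) ^ 2 = 3 := by exact_mod_cast h3sq
      rw [hμ', hω']
      push_cast
      linear_combination (((A:ℂ) + B)^2/36) * hrC + (((A:ℂ) - B)^2/4) * Complex.I_sq
        + (2/3 : ℂ) * habC
    · have habC : (A:ℂ) * (B:ℂ) = 1/2 := by rw [← Complex.ofReal_mul, hAB]; norm_num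
      have hrC : ((Real.sqrt 3 : ℝ):ℂ) ^ 2 = 3 := by exact_mod_cast h3sq
      have h1C : (A:ℂ) ^ 3 + (B:ℂ) ^ 3 = 1 := by exact_mod_cast congrArg (Complex.ofReal) h1R
      have hrne : ((Real.sqrt 3 : ℝ):ℂ) ≠ 0 := by
        exact_mod_cast Complex.ofReal_ne_zero.mpr (ne_of_gt h3pos)
      have hinv : (1:ℂ) / (3 * ((Real.sqrt 3 : ℝ):ℂ)) = ((Real.sqrt 3 : ℝ):ℂ) / 9 := by
        field_simp
        linear_combination (-3:ℂ) * hrC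
      rw [hinv]
      push_cast
      linear_combination
        (((Real.sqrt 3:ℝ):ℂ) * ((A:ℂ)+B)^3/216 + ((A:ℂ)+B)^2*((A:ℂ)-B)*I/24) * hrC
        + (((Real.sqrt 3:ℝ):ℂ) * ((A:ℂ)+B)*((A:ℂ)-B)^2/8 + ((A:ℂ)-B)^3*I/8) * Complex.I_sq
        + (((Real.sqrt 3:ℝ):ℂ) * ((A:ℂ)+B)/6 + ((A:ℂ)-B)*I/2) * habC
        - (((Real.sqrt 3:ℝ):ℂ)/9) * h1C
end
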